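/- Let N ≥ 1 and let w, u : ℤ → ℂ satisfy ∑_{m∈ℤ} |w(m)| < ∞ and ∑_{m∈ℤ} |u(m)| < ∞, with w(m) ≥ 0 real, and assume that for every r ∈ {0,…,N−1} the aliased sum W(r) = ∑_{s∈ℤ} w(r + sN) is nonzero. Define the N×N matrices G_{jp} = ∑_{m∈ℤ} w(m) e^{2πim(j−p)/N} and H_{jp} = ∑_{m∈ℤ} u(m) e^{2πim(j−p)/N}. Then G is invertible, and the transport matrix T = H · G⁻¹ has entries T_{jp} = (1/N) ∑_{r=0}^{N−1} ( U(r) / W(r) ) e^{2πi r (j−p)/N}, where U(r) = ∑_{s∈ℤ} u(r + sN). -/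

import Mathlib

open Matrix Finset Complex

noncomputable section IFDaux

def ifdE (N : ℕ) (r d : ℤ) : ℂ :=
  Complex.exp (2 * Real.pi * Complex.I * r * d / N)

lemma ifdE_period (N : ℕ) (hN : 1 ≤ N) (r s d : ℤ) :
    ifdE N (r + s * N) d = ifdE N r d := by
  have hNc : (N : ℂ) ≠ 0 := Nat.cast_ne_zero.mpr (by omega)
  unfold ifdE
  push_cast
  rw [show 2 * (Real.pi : ℂ) * Complex.I * ((r : ℂ) + s * N) * d / N
      = 2 * Real.pi * Complex.I * r * d / N + (s * d : ℤ) * (2 * Real.pi * Complex.I) by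
    push_cast; field_simp]
  rw [Complex.exp_add, Complex.exp_int_mul_two_pi_mul_I, mul_one]

lemma ifdE_pow (N : ℕ) (k : ℤ) (q : ℕ) : ifdE N k q = (ifdE N k 1) ^ q := by
  unfold ifdE
  rw [← Complex.exp_nat_mul]
  congr 1
  push_cast; ring

lemma ifdE_eq_one_iff (N : ℕ) (hN : 1 ≤ N) (k : ℤ) :
    ifdE N k 1 = 1 ↔ (N : ℤ) ∣ k := by
  have hNc : (N : ℂ) ≠ 0 := Nat.cast_ne_zero.mpr (by omega)
  have h2 : (2 : ℂ) * Real.pi * Complex.I ≠ 0 := by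
    simp [Complex.I_ne_zero, Complex.ofReal_ne_zero, Real.pi_ne_zero]
  unfold ifdE
  rw [Complex.exp_eq_one_iff]
  constructor
  · rintro ⟨n, hn⟩
    have hk : (k : ℂ) = N * n := by
      field_simp at hn
      exact mul_left_cancel₀ h2 (by push_cast at hn; linear_combination (2 * Real.pi * Complex.I) * hn)
    exact ⟨n, by exact_mod_cast hk⟩
  · rintro ⟨n, rfl⟩
    exact ⟨n, by push_cast; field_simp⟩

lemma ifdE_sum_range (N : ℕ) (hN : 1 ≤ N) (k : ℤ) :
    ∑ q ∈ Finset.range N, ifdE N k q = if (N : ℤ) ∣ k then (N : ℂ) else 0 := by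
  simp only [show ∀ q : ℕ, ifdE N k q = (ifdE N k 1) ^ q from fun q => ifdE_pow N k q]
  by_cases h : (N : ℤ) ∣ k
  · rw [if_pos h]
    rw [(ifdE_eq_one_iff N hN k).mpr h]
    simp
  · rw [if_neg h]
    have hz : ifdE N k 1 ≠ 1 := fun hc => h ((ifdE_eq_one_iff N hN k).mp hc)
    rw [geom_sum_eq hz]
    have hNc : (N : ℂ) ≠ 0 := Nat.cast_ne_zero.mpr (by omega)
    have hone : (ifdE N k 1) ^ N = 1 := by
      rw [← ifdE_pow]
      unfold ifdE
      push_cast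
      rw [show 2 * (Real.pi : ℂ) * Complex.I * k * ((N : ℕ) : ℂ) / N
          = (k : ℂ) * (2 * Real.pi * Complex.I) by field_simp]
      exact_mod_cast Complex.exp_int_mul_two_pi_mul_I k
    rw [hone]; simp

end IFDaux

lemma norm_ifdE (N : ℕ) (r d : ℤ) : ‖ifdE N r d‖ = 1 := by
  unfold ifdE
  rw [show 2 * (Real.pi : ℂ) * Complex.I * r * d / N
      = ((2 * Real.pi * r * d / N : ℝ) : ℂ) * Complex.I by push_cast; ring]
  exact Complex.norm_exp_ofReal_mul_I _

lemma ifd_alias (N : ℕ) (hN : 1 ≤ N) (f : ℤ → ℂ) (hf : Summable fun m => ‖f m‖) (d : ℤ) :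
    ∑' m : ℤ, f m * ifdE N m d
      = ∑ r ∈ Finset.range N, (∑' s : ℤ, f ((r : ℤ) + s * N)) * ifdE N r d := by
  have : NeZero N := ⟨by omega⟩
  have hg : Summable (fun m : ℤ => f m * ifdE N m d) := by
    apply Summable.of_norm
    simp only [norm_mul, norm_ifdE, mul_one]
    exact hf
  set φ : Fin N × ℤ ≃ ℤ := (Equiv.prodComm (Fin N) ℤ).trans (Int.divModEquiv N).symm with hφ
  have hφval : ∀ q : Fin N × ℤ, φ q = q.2 * N + (q.1 : ℤ) := fun q => rfl
  have key : ∀ q : Fin N × ℤ,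
      f (φ q) * ifdE N (φ q) d = f ((q.1 : ℤ) + q.2 * N) * ifdE N q.1 d := by
    intro q
    rw [hφval, add_comm ((q.2 : ℤ) * N) (q.1 : ℤ), ifdE_period N hN _ _ _]
  have hsum2 : Summable (fun q : Fin N × ℤ => f ((q.1 : ℤ) + q.2 * N) * ifdE N q.1 d) := by
    refine Summable.congr (φ.summable_iff.mpr hg) key
  calc ∑' m : ℤ, f m * ifdE N m d
      = ∑' q : Fin N × ℤ, f (φ q) * ifdE N (φ q) d := (φ.tsum_eq _).symm
    _ = ∑' q : Fin N × ℤ, f ((q.1 : ℤ) + q.2 * N) * ifdE N q.1 d := tsum_congr key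
    _ = ∑' r : Fin N, ∑' s : ℤ, f ((r : ℤ) + s * N) * ifdE N r d := Summable.tsum_prod' hsum2 (fun r => (hsum2.prod_factor r))
    _ = ∑' r : Fin N, (∑' s : ℤ, f ((r : ℤ) + s * N)) * ifdE N r d := by
        refine tsum_congr fun r => ?_
        exact tsum_mul_right
    _ = ∑ r : Fin N, (∑' s : ℤ, f ((r : ℤ) + s * N)) * ifdE N r d := tsum_fintype _
    _ = ∑ r ∈ Finset.range N, (∑' s : ℤ, f ((r : ℤ) + s * N)) * ifdE N r d :=
        Fin.sum_univ_eq_sum_range (fun r : ℕ => (∑' s : ℤ, f ((r : ℤ) + s * N)) * ifdE N r d) N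

lemma ifdE_comm (N : ℕ) (r d : ℤ) : ifdE N r d = ifdE N d r := by
  unfold ifdE; congr 1; ring

lemma ifdE_sub (N : ℕ) (r d e : ℤ) : ifdE N r (d - e) = ifdE N r d * ifdE N r (-e) := by
  unfold ifdE
  rw [← Complex.exp_add]
  congr 1
  push_cast; ring

lemma ifdE_split (N : ℕ) (r r' j p q : ℤ) :
    ifdE N r (j - q) * ifdE N r' (q - p)
      = (ifdE N r j * ifdE N r' (-p)) * ifdE N (r' - r) q := by
  unfold ifdE
  rw [← Complex.exp_add, ← Complex.exp_add, ← Complex.exp_add]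
  congr 1
  push_cast; ring

lemma dvd_iff_eq (N r r' : ℕ) (hr : r < N) (hr' : r' < N) :
    (N : ℤ) ∣ ((r' : ℤ) - r) ↔ r' = r := by
  constructor
  · intro h
    have h0 : ((r' : ℤ) - r) = 0 :=
      Int.eq_zero_of_dvd_of_natAbs_lt_natAbs h (by omega)
    omega
  · rintro rfl; simp

noncomputable def ifdC (N : ℕ) (a : ℕ → ℂ) : Matrix (Fin N) (Fin N) ℂ :=
  Matrix.of fun j p => ∑ r ∈ Finset.range N, a r * ifdE N r ((j : ℤ) - (p : ℤ))

lemma ifdC_congr (N : ℕ) (a b : ℕ → ℂ) (h : ∀ r ∈ Finset.range N, a r = b r) :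
    ifdC N a = ifdC N b := by
  ext j p
  simp only [ifdC, Matrix.of_apply]
  exact Finset.sum_congr rfl fun r hr => by rw [h r hr]

lemma ifdE_sum_fin (N : ℕ) (hN : 1 ≤ N) (k : ℤ) :
    ∑ q : Fin N, ifdE N k (q : ℤ) = if (N : ℤ) ∣ k then (N : ℂ) else 0 := by
  rw [Fin.sum_univ_eq_sum_range (fun q : ℕ => ifdE N k q)]
  exact ifdE_sum_range N hN k

lemma ifdC_mul (N : ℕ) (hN : 1 ≤ N) (a b : ℕ → ℂ) :
    ifdC N a * ifdC N b = ifdC N (fun r => (N : ℂ) * (a r * b r)) := by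
  ext j p
  simp only [ifdC, Matrix.mul_apply, Matrix.of_apply]
  calc ∑ q : Fin N, (∑ r ∈ Finset.range N, a r * ifdE N r ((j : ℤ) - q)) *
          (∑ r' ∈ Finset.range N, b r' * ifdE N r' ((q : ℤ) - p))
      = ∑ r ∈ Finset.range N, ∑ r' ∈ Finset.range N,
          (a r * b r' * (ifdE N r j * ifdE N r' (-(p : ℤ)))) *
            ∑ q : Fin N, ifdE N ((r' : ℤ) - r) (q : ℤ) := by
        have h1 : ∀ q : Fin N,
            (∑ r ∈ Finset.range N, a r * ifdE N r ((j : ℤ) - q)) *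
              (∑ r' ∈ Finset.range N, b r' * ifdE N r' ((q : ℤ) - p))
            = ∑ r ∈ Finset.range N, ∑ r' ∈ Finset.range N,
                (a r * b r' * (ifdE N r j * ifdE N r' (-(p : ℤ)))) *
                  ifdE N ((r' : ℤ) - r) (q : ℤ) := by
          intro q
          rw [Finset.sum_mul_sum]
          refine Finset.sum_congr rfl fun r _ => Finset.sum_congr rfl fun r' _ => ?_
          rw [show (a r * ifdE N r ((j : ℤ) - q)) * (b r' * ifdE N r' ((q : ℤ) - p))
              = (a r * b r') * (ifdE N r ((j : ℤ) - q) * ifdE N r' ((q : ℤ) - p)) by ring]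
          rw [ifdE_split]
          ring
        rw [Finset.sum_congr rfl (fun q _ => h1 q), Finset.sum_comm]
        refine Finset.sum_congr rfl fun r _ => ?_
        rw [Finset.sum_comm]
        refine Finset.sum_congr rfl fun r' _ => ?_
        rw [← Finset.mul_sum]
    _ = ∑ r ∈ Finset.range N, ((N : ℂ) * (a r * b r)) * ifdE N r ((j : ℤ) - p) := by
        refine Finset.sum_congr rfl fun r hr => ?_
        have : ∀ r' ∈ Finset.range N,
            (a r * b r' * (ifdE N r j * ifdE N r' (-(p : ℤ)))) *
              ∑ q : Fin N, ifdE N ((r' : ℤ) - r) (q : ℤ)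
            = if r' = r then (a r * b r' * (ifdE N r j * ifdE N r' (-(p : ℤ)))) * N else 0 := by
          intro r' hr'
          rw [ifdE_sum_fin N hN]
          by_cases hc : r' = r
          · rw [if_pos ((dvd_iff_eq N r r' (Finset.mem_range.mp hr)
              (Finset.mem_range.mp hr')).mpr hc), if_pos hc]
          · rw [if_neg (fun hd => hc ((dvd_iff_eq N r r' (Finset.mem_range.mp hr)
              (Finset.mem_range.mp hr')).mp hd)), if_neg hc, mul_zero]
        rw [Finset.sum_congr rfl this, Finset.sum_ite_eq' (Finset.range N) r
          (fun r' => (a r * b r' * (ifdE N r j * ifdE N r' (-(p : ℤ)))) * N), if_pos hr]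
        rw [ifdE_sub]
        ring

lemma ifdC_invN (N : ℕ) (hN : 1 ≤ N) : ifdC N (fun _ => (N : ℂ)⁻¹) = 1 := by
  have hNc : (N : ℂ) ≠ 0 := Nat.cast_ne_zero.mpr (by omega)
  ext j p
  simp only [ifdC, Matrix.of_apply]
  rw [← Finset.mul_sum]
  rw [show (∑ r ∈ Finset.range N, ifdE N r ((j : ℤ) - (p : ℤ)))
      = ∑ r ∈ Finset.range N, ifdE N ((j : ℤ) - (p : ℤ)) r from
    Finset.sum_congr rfl fun r _ => ifdE_comm N r _]
  rw [ifdE_sum_range N hN]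
  by_cases h : j = p
  · subst h
    rw [if_pos (by simp), Matrix.one_apply_eq, inv_mul_cancel₀ hNc]
  · rw [Matrix.one_apply_ne h, if_neg, mul_zero]
    intro hd
    have hj := j.isLt
    have hp := p.isLt
    have h0 : ((j : ℤ) - (p : ℤ)) = 0 :=
      Int.eq_zero_of_dvd_of_natAbs_lt_natAbs hd (by omega)
    exact h (Fin.ext (by omega))


/-- **Momentum-space form of the translation-invariant IFD transport operator.**
With `G_{jp} = ∑_m w(m) e^{2πim(j−p)/N}` (from `w = Φ|B̂|²`) and
`H_{jp} = ∑_m u(m) e^{2πim(j−p)/N}` (from `u = ŪΦ|B̂|²`), if the aliased sums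
`W(r) = ∑_s w(r+sN)` are all nonzero, then `G` is invertible and the transport
operator `T = H G⁻¹` has entries
`T_{jp} = (1/N) ∑_{r<N} (U(r)/W(r)) e^{2πir(j−p)/N}` where `U(r) = ∑_s u(r+sN)`. -/
theorem ifd_transport_operator_dft_form
    (N : ℕ) (hN : 1 ≤ N)
    (w : ℤ → ℝ) (hw0 : ∀ m, 0 ≤ w m) (hw : Summable fun m => |w m|)
    (u : ℤ → ℂ) (hu : Summable fun m => ‖u m‖)
    (hW : ∀ r ∈ Finset.range N, (∑' s : ℤ, w ((r : ℤ) + s * N)) ≠ 0)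
    (G H : Matrix (Fin N) (Fin N) ℂ)
    (hG : G = Matrix.of fun j p : Fin N =>
      ∑' m : ℤ, (w m : ℂ) *
        Complex.exp (2 * Real.pi * Complex.I * m * ((j : ℤ) - (p : ℤ)) / N))
    (hH : H = Matrix.of fun j p : Fin N =>
      ∑' m : ℤ, u m *
        Complex.exp (2 * Real.pi * Complex.I * m * ((j : ℤ) - (p : ℤ)) / N)) :
    IsUnit G.det ∧
      H * G⁻¹ = Matrix.of fun j p : Fin N =>
        (N : ℂ)⁻¹ * ∑ r ∈ Finset.range N,
          ((∑' s : ℤ, u ((r : ℤ) + s * N)) / ((∑' s : ℤ, w ((r : ℤ) + s * N) : ℝ) : ℂ)) *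
            Complex.exp (2 * Real.pi * Complex.I * r * ((j : ℤ) - (p : ℤ)) / N) := by
  have hNc : (N : ℂ) ≠ 0 := Nat.cast_ne_zero.mpr (by omega)
  set Wc : ℕ → ℂ := fun r => ((∑' s : ℤ, w ((r : ℤ) + s * N) : ℝ) : ℂ) with hWc
  set Uc : ℕ → ℂ := fun r => ∑' s : ℤ, u ((r : ℤ) + s * N) with hUc
  have hWne : ∀ r ∈ Finset.range N, Wc r ≠ 0 := fun r hr =>
    Complex.ofReal_ne_zero.mpr (hW r hr)
  have hGc : G = ifdC N Wc := by
    rw [hG]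
    ext j p
    simp only [ifdC, Matrix.of_apply]
    calc (∑' m : ℤ, (w m : ℂ) *
            Complex.exp (2 * Real.pi * Complex.I * m * ((j : ℤ) - (p : ℤ)) / N))
        = ∑' m : ℤ, (w m : ℂ) * ifdE N m ((j : ℤ) - (p : ℤ)) := by
          refine tsum_congr fun m => ?_
          unfold ifdE; push_cast; ring_nf
      _ = ∑ r ∈ Finset.range N, (∑' s : ℤ, ((w ((r : ℤ) + s * N) : ℂ)))
            * ifdE N r ((j : ℤ) - (p : ℤ)) :=
          ifd_alias N hN _ (by simpa using hw) _
      _ = ∑ r ∈ Finset.range N, Wc r * ifdE N r ((j : ℤ) - (p : ℤ)) := by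
          refine Finset.sum_congr rfl fun r _ => ?_
          simp only [hWc, ← Complex.ofReal_tsum]
  have hHc : H = ifdC N Uc := by
    rw [hH]
    ext j p
    simp only [ifdC, Matrix.of_apply]
    calc (∑' m : ℤ, u m *
            Complex.exp (2 * Real.pi * Complex.I * m * ((j : ℤ) - (p : ℤ)) / N))
        = ∑' m : ℤ, u m * ifdE N m ((j : ℤ) - (p : ℤ)) := by
          refine tsum_congr fun m => ?_
          unfold ifdE; push_cast; ring_nf
      _ = ∑ r ∈ Finset.range N, Uc r * ifdE N r ((j : ℤ) - (p : ℤ)) :=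
          ifd_alias N hN _ hu _
  have hGB : G * ifdC N (fun r => ((N : ℂ) ^ 2 * Wc r)⁻¹) = 1 := by
    rw [hGc, ifdC_mul N hN]
    rw [ifdC_congr N _ (fun _ => (N : ℂ)⁻¹)
      (fun r hr => by field_simp [hWne r hr])]
    exact ifdC_invN N hN
  have hdet : IsUnit G.det := Matrix.isUnit_det_of_right_inverse hGB
  refine ⟨hdet, ?_⟩
  set T : Matrix (Fin N) (Fin N) ℂ :=
    ifdC N (fun r => (N : ℂ)⁻¹ * (Uc r / Wc r)) with hT
  have hTG : T * G = H := by
    rw [hT, hGc, ifdC_mul N hN, hHc]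
    exact ifdC_congr N _ _ (fun r hr => by field_simp [hWne r hr])
  have hHGi : H * G⁻¹ = T := by
    calc H * G⁻¹ = (T * G) * G⁻¹ := by rw [hTG]
      _ = T * (G * G⁻¹) := by rw [Matrix.mul_assoc]
      _ = T := by rw [Matrix.mul_nonsing_inv G hdet, Matrix.mul_one]
  rw [hHGi, hT]
  ext j p
  simp only [ifdC, Matrix.of_apply]
  rw [Finset.mul_sum]
  refine Finset.sum_congr rfl fun r _ => ?_
  have he : ifdE N r ((j : ℤ) - (p : ℤ))
      = Complex.exp (2 * Real.pi * Complex.I * r * ((j : ℤ) - (p : ℤ)) / N) := by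
    unfold ifdE; congr 1; push_cast; ring
  simp only [hUc, hWc]
  rw [he, mul_assoc]
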